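/- Let l be a prelogarithmic section of k((G)), let U ⊊ H be subgroups of G with U a proper convex subgroup of H (U = {1} allowed), and suppose (U,H) satisfies condition (†). Inside the exponential extension G^#, let H^{#,U} := ι(H) · {e(f) : f ∈ k((H^{>U}))} (note k((H^{>U})) ⊆ k((G^{>1})), so this makes sense). Then: (i) ι(H) is a proper convex subgroup of the subgroup H^{#,U} of G^#; (ii) every element of H^{#,U} has a unique representation ι(h)·e(f) with h ∈ H and f ∈ k((H^{>U})) (so H^{#,U} is the anti-lexicographic product of ι(H) and {e(f) : f ∈ k((H^{>U}))}); (iii) l^#(h^#) < |f| for every h^# ∈ H^{#,U} and every nonzero f ∈ k(((H^{#,U})^{>ι(H)})), where (H^{#,U})^{>ι(H)} := {g ∈ H^{#,U} : g > ι(h) for all h ∈ H}. -/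

import Mathlib

/-! Common framework: fields of generalized power series `k((G))` over a multiplicative
linearly ordered abelian group `G`, realized as Mathlib Hahn series over the additive
order-dual of `G` (so that anti well-ordered supports in `G` become partially
well-ordered supports), with the anti-lexicographic order. -/

noncomputable section
open HahnSeries
open scoped Classical

/-- The additive order-dual copy of the multiplicative group `G`:
anti well-ordered subsets of `G` correspond to well-ordered subsets of `gdual G`. -/
abbrev gdual (G : Type*) [CommGroup G] [LinearOrder G] [IsOrderedMonoid G] : Type _ := Additive Gᵒᵈ

/-- View an element of `G` as an exponent (element of `gdual G`). -/
def toGd {G : Type*} [CommGroup G] [LinearOrder G] [IsOrderedMonoid G] (g : G) : gdual G :=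
  Additive.ofMul (OrderDual.toDual g)

/-- View an exponent (element of `gdual G`) as an element of `G`. -/
def toG {G : Type*} [CommGroup G] [LinearOrder G] [IsOrderedMonoid G] (γ : gdual G) : G :=
  OrderDual.ofDual (Additive.toMul γ)

section HahnOrder

variable {k : Type*} [Field k] [LinearOrder k] [IsStrictOrderedRing k] {Γ' : Type*} [LinearOrder Γ']

theorem hahn_leadingCoeff_of_ne {x : HahnSeries Γ' k} (hx : x ≠ 0) :
    x.leadingCoeff = x.coeff (x.isWF_support.min (HahnSeries.support_nonempty_iff.2 hx)) := by
  unfold HahnSeries.leadingCoeff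
  rw [HahnSeries.orderTop_of_ne_zero hx]
  rfl

theorem hahn_leadingCoeff_neg (x : HahnSeries Γ' k) : (-x).leadingCoeff = -x.leadingCoeff := by
  by_cases h : x = 0
  · simp [h]
  · have hn : (-x) ≠ 0 := neg_ne_zero.2 h
    rw [hahn_leadingCoeff_of_ne h, hahn_leadingCoeff_of_ne hn]
    have hmin : (-x).isWF_support.min (HahnSeries.support_nonempty_iff.2 hn)
        = x.isWF_support.min (HahnSeries.support_nonempty_iff.2 h) := by
      apply le_antisymm
      · exact Set.IsWF.min_le _ _ (by
          rw [HahnSeries.support_neg (x := x)]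
          exact x.isWF_support.min_mem (HahnSeries.support_nonempty_iff.2 h))
      · refine Set.IsWF.min_le _ _ ?_
        rw [← HahnSeries.support_neg (x := x)]
        exact (-x).isWF_support.min_mem (HahnSeries.support_nonempty_iff.2 hn)
    rw [hmin, HahnSeries.coeff_neg]

theorem hahn_leadingCoeff_add_pos {a b : HahnSeries Γ' k}
    (ha : 0 < a.leadingCoeff) (hb : 0 < b.leadingCoeff) : 0 < (a + b).leadingCoeff := by
  have key : ∀ x y : HahnSeries Γ' k, 0 < x.leadingCoeff → 0 < y.leadingCoeff →
      ∀ (hx0 : x ≠ 0) (hy0 : y ≠ 0),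
      x.isWF_support.min (HahnSeries.support_nonempty_iff.2 hx0) ≤
        y.isWF_support.min (HahnSeries.support_nonempty_iff.2 hy0) →
      0 < (x + y).leadingCoeff := by
    intro x y hx hy hx0 hy0 hle
    set mx := x.isWF_support.min (HahnSeries.support_nonempty_iff.2 hx0) with hmx
    set my := y.isWF_support.min (HahnSeries.support_nonempty_iff.2 hy0) with hmy
    have hcx : x.coeff mx = x.leadingCoeff := (hahn_leadingCoeff_of_ne hx0).symm
    have hcoeff : 0 < (x + y).coeff mx := by
      rcases lt_or_eq_of_le hle with hlt | heq
      · have hny : y.coeff mx = 0 := by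
          by_contra hc
          exact absurd (Set.IsWF.min_le _ _ (by rwa [HahnSeries.mem_support])) (not_le.2 hlt)
        rw [HahnSeries.coeff_add, hny, add_zero, hcx]; exact hx
      · have hcy : y.coeff mx = y.leadingCoeff := by
          rw [heq]; exact (hahn_leadingCoeff_of_ne hy0).symm
        rw [HahnSeries.coeff_add, hcx, hcy]; exact add_pos hx hy
    have hmem : mx ∈ (x + y).support := by
      rw [HahnSeries.mem_support]; exact ne_of_gt hcoeff
    have hxy0 : x + y ≠ 0 := HahnSeries.support_nonempty_iff.1 ⟨mx, hmem⟩
    have hminxy : (x + y).isWF_support.min (HahnSeries.support_nonempty_iff.2 hxy0) = mx := by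
      apply le_antisymm (Set.IsWF.min_le _ _ hmem)
      have hmm := (x + y).isWF_support.min_mem (HahnSeries.support_nonempty_iff.2 hxy0)
      rcases HahnSeries.support_add_subset _ _ hmm with hmem' | hmem'
      · exact Set.IsWF.min_le _ _ hmem'
      · exact le_trans hle (Set.IsWF.min_le _ _ hmem')
    rw [hahn_leadingCoeff_of_ne hxy0, hminxy]
    exact hcoeff
  have ha0 : a ≠ 0 := by intro h; rw [h] at ha; simp at ha
  have hb0 : b ≠ 0 := by intro h; rw [h] at hb; simp at hb
  rcases le_total (a.isWF_support.min (HahnSeries.support_nonempty_iff.2 ha0))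
      (b.isWF_support.min (HahnSeries.support_nonempty_iff.2 hb0)) with hle | hle
  · exact key a b ha hb ha0 hb0 hle
  · rw [add_comm]; exact key b a hb ha hb0 ha0 hle

/-- The anti-lexicographic linear order on generalized power series:
`x` is positive iff its leading coefficient (the coefficient at the valuation `v x`,
i.e. at the largest element of the support) is positive. -/
instance instHahnLinearOrder : LinearOrder (HahnSeries Γ' k) where
  le x y := x = y ∨ 0 < (y - x).leadingCoeff
  lt x y := 0 < (y - x).leadingCoeff
  le_refl x := Or.inl rfl
  le_trans x y z hxy hyz := by
    rcases hxy with rfl | hxy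
    · exact hyz
    rcases hyz with rfl | hyz
    · exact Or.inr hxy
    · refine Or.inr ?_
      have := hahn_leadingCoeff_add_pos hyz hxy
      rwa [sub_add_sub_cancel] at this
  le_antisymm x y hxy hyx := by
    rcases hxy with rfl | hxy
    · rfl
    rcases hyx with rfl | hyx
    · rfl
    · exfalso
      have h1 : (x - y).leadingCoeff = -(y - x).leadingCoeff := by
        rw [← hahn_leadingCoeff_neg, neg_sub]
      rw [h1] at hyx
      exact absurd hxy (not_lt.2 (le_of_lt (neg_pos.1 hyx)))
  lt_iff_le_not_ge x y := by
    constructor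
    · intro h
      refine ⟨Or.inr h, ?_⟩
      rintro (rfl | h')
      · change 0 < (y - y).leadingCoeff at h
        rw [sub_self] at h
        simp at h
      · have h1 : (x - y).leadingCoeff = -(y - x).leadingCoeff := by
          rw [← hahn_leadingCoeff_neg, neg_sub]
        rw [h1] at h'
        exact absurd h (not_lt.2 (le_of_lt (neg_pos.1 h')))
    · rintro ⟨hle, hnot⟩
      rcases hle with rfl | h
      · exact absurd (Or.inl rfl) hnot
      · exact h
  le_total x y := by
    by_cases h : x = y
    · exact Or.inl (Or.inl h)
    · have h0 : y - x ≠ 0 := sub_ne_zero.2 (Ne.symm h)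
      have hlc : (y - x).leadingCoeff ≠ 0 := HahnSeries.leadingCoeff_ne_zero.2 h0
      rcases lt_or_gt_of_ne hlc with hneg | hpos
      · refine Or.inr (Or.inr ?_)
        rw [show x - y = -(y - x) from (neg_sub y x).symm, hahn_leadingCoeff_neg]
        exact neg_pos.2 hneg
      · exact Or.inl (Or.inr hpos)
  toDecidableLE := fun _ _ => Classical.dec _

/-- With the anti-lexicographic order, `k((G))` is a linearly ordered abelian group. -/
instance instHahnLOACG : IsOrderedAddMonoid (HahnSeries Γ' k) where
  add_le_add_left := by
    intro x y hxy c
    rcases hxy with rfl | h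
    · exact le_refl _
    · exact Or.inr (by rwa [add_sub_add_right_eq_sub])

theorem hahn_lt_iff (x y : HahnSeries Γ' k) : x < y ↔ 0 < (y - x).leadingCoeff := Iff.rfl

theorem hahn_single_pos (a : Γ') : (0 : HahnSeries Γ' k) < HahnSeries.single a 1 := by
  rw [hahn_lt_iff, sub_zero, HahnSeries.leadingCoeff_of_single]
  exact one_pos

theorem hahn_single_lt_single {a b : Γ'} (hab : b < a) :
    (HahnSeries.single a 1 : HahnSeries Γ' k) < HahnSeries.single b 1 := by
  rw [hahn_lt_iff]
  set δ : HahnSeries Γ' k := HahnSeries.single b 1 - HahnSeries.single a 1 with hδdef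
  have hne : b ≠ a := ne_of_lt hab
  have hb : δ.coeff b = 1 := by
    rw [hδdef, HahnSeries.coeff_sub, HahnSeries.coeff_single_same,
      HahnSeries.coeff_single_of_ne hne, sub_zero]
  have hbmem : b ∈ δ.support := by rw [HahnSeries.mem_support, hb]; exact one_ne_zero
  have hδ : δ ≠ 0 := HahnSeries.support_nonempty_iff.1 ⟨b, hbmem⟩
  have hsub : δ.support ⊆ {b, a} := by
    intro γ hγ
    rw [HahnSeries.mem_support] at hγ
    by_contra hγ'
    simp only [Set.mem_insert_iff, Set.mem_singleton_iff, not_or] at hγ'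
    apply hγ
    rw [hδdef, HahnSeries.coeff_sub, HahnSeries.coeff_single_of_ne hγ'.1,
      HahnSeries.coeff_single_of_ne hγ'.2, sub_zero]
  have hmin : δ.isWF_support.min (HahnSeries.support_nonempty_iff.2 hδ) = b := by
    have hmem := δ.isWF_support.min_mem (HahnSeries.support_nonempty_iff.2 hδ)
    have hle := δ.isWF_support.min_le (HahnSeries.support_nonempty_iff.2 hδ) hbmem
    rcases hsub hmem with h | h
    · exact h
    · exact absurd (h ▸ hle) (not_le.2 hab)
  rw [hahn_leadingCoeff_of_ne hδ, hmin, hb]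
  exact one_pos

end HahnOrder

section Series

variable {k : Type*} [Field k] [LinearOrder k] [IsStrictOrderedRing k] {G : Type*} [CommGroup G] [LinearOrder G] [IsOrderedMonoid G]

/-- The summable family `n ↦ (-1)^n/(n+1) • ε^(n+1)` (`ε` of positive order). -/
def logFamily (ε : HahnSeries (gdual G) k) (hε : 0 < ε.orderTop) :
    HahnSeries.SummableFamily (gdual G) k ℕ where
  toFun n := ((-1 : k) ^ n / ((n : k) + 1)) • ε ^ (n + 1)
  isPWO_iUnion_support' := by
    refine ((HahnSeries.SummableFamily.powers ε).isPWO_iUnion_support).mono ?_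
    intro γ hγ
    rw [Set.mem_iUnion] at hγ ⊢
    obtain ⟨n, hn⟩ := hγ
    refine ⟨n + 1, ?_⟩
    rw [HahnSeries.mem_support] at hn ⊢
    intro h
    rw [HahnSeries.SummableFamily.powers_of_orderTop_pos hε] at h
    apply hn
    show (((-1 : k) ^ n / ((n : k) + 1)) • ε ^ (n + 1)).coeff γ = 0
    rw [HahnSeries.coeff_smul]
    show ((-1 : k) ^ n / ((n : k) + 1)) • (ε ^ (n + 1)).coeff γ = 0
    rw [show (ε ^ (n + 1)).coeff γ = 0 from h, smul_zero]
  finite_co_support' g := by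
    have h := (HahnSeries.SummableFamily.powers ε).finite_co_support g
    refine Set.Finite.subset (h.preimage (Set.injOn_of_injective Nat.succ_injective)) ?_
    intro n hn
    simp only [Set.mem_preimage, Set.mem_setOf_eq] at hn ⊢
    intro h0
    apply hn
    show (((-1 : k) ^ n / ((n : k) + 1)) • ε ^ (n + 1)).coeff g = 0
    rw [HahnSeries.coeff_smul]
    have : ((HahnSeries.SummableFamily.powers ε) (Nat.succ n)).coeff g = 0 := h0
    rw [HahnSeries.SummableFamily.powers_of_orderTop_pos hε] at this
    rw [show (ε ^ (n + 1)).coeff g = 0 from this, smul_zero]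

/-- The logarithm on 1-units: `1 + ε ↦ Σ_{i ≥ 1} (-1)^(i-1) ε^i / i`
(for `ε` supported on `G^{<1}`; junk value `0` otherwise). -/
def logOneUnit (ε : HahnSeries (gdual G) k) : HahnSeries (gdual G) k :=
  if hε : 0 < ε.orderTop then (logFamily ε hε).hsum else 0

/-- The canonical extension of an order-preserving embedding `ψ : G₁ → G₂` to the fields of
generalized power series, applying `ψ` to every monomial (junk value `0` if `ψ` is not
order-preserving). -/
def extMap {k : Type*} [Field k] [LinearOrder k] [IsStrictOrderedRing k] {G₁ G₂ : Type*} [CommGroup G₁] [LinearOrder G₁] [IsOrderedMonoid G₁]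
    [CommGroup G₂] [LinearOrder G₂] [IsOrderedMonoid G₂] (ψ : G₁ → G₂) :
    HahnSeries (gdual G₁) k → HahnSeries (gdual G₂) k :=
  if h : StrictMono ψ then
    HahnSeries.embDomain
      (OrderEmbedding.ofStrictMono (fun γ => toGd (ψ (toG γ)))
        (fun a b hab => show toGd (ψ (toG a)) < toGd (ψ (toG b)) from
          h (show toG b < toG a from hab)))
  else fun _ => 0

/-- The additive subgroup `k((G^{>1}))` of the series supported on `G^{>1}`. -/
def largeSeries (k : Type*) [Field k] [LinearOrder k] [IsStrictOrderedRing k] (G : Type*) [CommGroup G] [LinearOrder G] [IsOrderedMonoid G] :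
    AddSubgroup (HahnSeries (gdual G) k) where
  carrier := {f | ∀ γ ∈ f.support, γ < (0 : gdual G)}
  zero_mem' := by intro γ hγ; rw [HahnSeries.support_zero] at hγ; exact absurd hγ (Set.notMem_empty γ)
  add_mem' := by
    intro a b ha hb γ hγ
    rcases HahnSeries.support_add_subset _ _ hγ with h | h
    exacts [ha γ h, hb γ h]
  neg_mem' := by
    intro a ha γ hγ
    rw [HahnSeries.support_neg] at hγ
    exact ha γ hγ

theorem mem_largeSeries {f : HahnSeries (gdual G) k} :
    f ∈ largeSeries k G ↔ ∀ γ ∈ f.support, γ < (0 : gdual G) := Iff.rfl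

/-- `log : (k^{>0}, ·) → (k, +)` is an order-preserving group embedding. -/
structure IsResidueLog (lg : k → k) : Prop where
  map_mul : ∀ a b : k, 0 < a → 0 < b → lg (a * b) = lg a + lg b
  strictMonoOn : StrictMonoOn lg (Set.Ioi 0)

/-- A prelogarithmic section of `k((G))`: an order-preserving group embedding
`l : (G, ·) → (k((G^{>1})), +)`. -/
structure IsPrelogSection (l : G → HahnSeries (gdual G) k) : Prop where
  supp_large : ∀ g : G, l g ∈ largeSeries k G
  map_mul : ∀ g h : G, l (g * h) = l g + l h
  strictMono : StrictMono l

/-- The prelogarithm associated to a prelogarithmic section `l` and a logarithm `lg` on the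
residue field: `L(g·a·(1+ε)) = l(g) + log(a) + Σ (-1)^(i-1) ε^i/i`. -/
def prelogL (lg : k → k) (l : G → HahnSeries (gdual G) k)
    (α : HahnSeries (gdual G) k) : HahnSeries (gdual G) k :=
  l (toG α.order) + HahnSeries.C (lg α.leadingCoeff) +
    logOneUnit ((HahnSeries.single α.order α.leadingCoeff)⁻¹ * α - 1)

/-- The group of exponentials `G^# = e[k((G^{>1}))]`, a multiplicative copy of the ordered
additive group `k((G^{>1}))`. The element `e(α)` is `Multiplicative.ofAdd ⟨α, _⟩`. -/
abbrev Gsharp (k : Type*) [Field k] [LinearOrder k] [IsStrictOrderedRing k] (G : Type*) [CommGroup G] [LinearOrder G] [IsOrderedMonoid G] :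
    Type _ := Multiplicative ↥(largeSeries k G)

/-- The embedding `ι : G → G^#`, `ι(g) := e(l(g))`. -/
def iotaSharp (l : G → HahnSeries (gdual G) k) (hl : ∀ g, l g ∈ largeSeries k G) (g : G) :
    Gsharp k G :=
  Multiplicative.ofAdd (⟨l g, hl g⟩ : ↥(largeSeries k G))

/-- The prelogarithmic section `l^#` of `k((G^#))`: `l^#(e(α)) := ι(α)`, where
`ι : k((G)) → k((G^#))` is the canonical extension of `ι : G → G^#`. -/
def lsharpFun (l : G → HahnSeries (gdual G) k) (hl : ∀ g, l g ∈ largeSeries k G)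
    (x : Gsharp k G) : HahnSeries (gdual (Gsharp k G)) k :=
  extMap (iotaSharp l hl) ((Multiplicative.toAdd x : ↥(largeSeries k G)) : HahnSeries (gdual G) k)

/-- The induced map `ψ^# : G₁^# → G₂^#`, `ψ^#(e(α)) := e(ψ(α))` (junk value `1` if the
canonical extension of `ψ` does not map `k((G₁^{>1}))` into `k((G₂^{>1}))`). -/
def psiSharp {k : Type*} [Field k] [LinearOrder k] [IsStrictOrderedRing k] {G₁ G₂ : Type*} [CommGroup G₁] [LinearOrder G₁] [IsOrderedMonoid G₁]
    [CommGroup G₂] [LinearOrder G₂] [IsOrderedMonoid G₂] (ψ : G₁ → G₂) (x : Gsharp k G₁) : Gsharp k G₂ :=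
  if h : ∀ f ∈ largeSeries k G₁, extMap ψ f ∈ largeSeries k G₂ then
    Multiplicative.ofAdd
      (⟨extMap ψ ((Multiplicative.toAdd x : ↥(largeSeries k G₁)) : HahnSeries (gdual G₁) k),
        h _ (Multiplicative.toAdd x).2⟩ : ↥(largeSeries k G₂))
  else 1

/-- Condition (†) for subgroups `U ⊆ H` of `G`:
`l(H) < |f|` for every nonzero `f ∈ k((H^{>U}))`. -/
def CondDagger (l : G → HahnSeries (gdual G) k) (U H : Subgroup G) : Prop :=
  ∀ h ∈ H, ∀ f : HahnSeries (gdual G) k, f ≠ 0 →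
    (∀ γ ∈ f.support, toG γ ∈ H ∧ ∀ u ∈ U, u < toG γ) → l h < |f|

/-- The growth axiom for a subgroup `H` of `G`:
`l(H) < |f|` for every nonzero `f ∈ k((H^{>1}))`. -/
def GrowthAxiom (l : G → HahnSeries (gdual G) k) (H : Subgroup G) : Prop :=
  CondDagger l (⊥ : Subgroup G) H

theorem mem_large_of_gt {f : HahnSeries (gdual G) k} {U H : Subgroup G}
    (hf : ∀ γ ∈ f.support, toG γ ∈ H ∧ ∀ u ∈ U, u < toG γ) : f ∈ largeSeries k G :=
  fun γ hγ => show (1 : G) < toG γ from (hf γ hγ).2 1 U.one_mem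

/-- The set `H^{#,U} = ι(H)·e[k((H^{>U}))] ⊆ G^#`. -/
def sharpProdSet (l : G → HahnSeries (gdual G) k) (hl : ∀ g, l g ∈ largeSeries k G)
    (U H : Subgroup G) : Set (Gsharp k G) :=
  {x | ∃ h ∈ H, ∃ f : HahnSeries (gdual G) k,
    ∃ hf : ∀ γ ∈ f.support, toG γ ∈ H ∧ ∀ u ∈ U, u < toG γ,
    x = iotaSharp l hl h *
      Multiplicative.ofAdd (⟨f, mem_large_of_gt hf⟩ : ↥(largeSeries k G))}

end Series

section Hahn

variable (k : Type*) [Field k] [LinearOrder k] [IsStrictOrderedRing k] {Γ : Type*} [LinearOrder Γ]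

/-- The Hahn group `Γ^k` of formal products `∏_γ x_γ^(g γ)` with anti well-ordered support,
ordered anti-lexicographically, realized as the multiplicative copy of the additive group of
Hahn series over `Γᵒᵈ` with coefficients in `k`. -/
abbrev HahnGroup (Γ : Type*) [LinearOrder Γ] (k : Type*) [Field k] [LinearOrder k] [IsStrictOrderedRing k] : Type _ :=
  Multiplicative (HahnSeries Γᵒᵈ k)

/-- The monomial `x_γ` in the Hahn group `Γ^k`. -/
def xMon (γ : Γ) : HahnGroup Γ k :=
  Multiplicative.ofAdd (HahnSeries.single (OrderDual.toDual γ) (1 : k))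

/-- The prelogarithmic section `l_σ` on `k((Γ^k))` induced by `σ : Γ → Γ`:
`l_σ(∏_γ x_γ^(g γ)) := Σ_γ (g γ)·x_(σ γ)` (junk value `0` if `σ` is not strictly
order-preserving). -/
def sigmaSection (σ : Γ → Γ) :
    HahnGroup Γ k → HahnSeries (gdual (HahnGroup Γ k)) k :=
  if hσ : StrictMono σ then fun g =>
    HahnSeries.embDomain
      (OrderEmbedding.ofStrictMono
        (fun γ : Γᵒᵈ => toGd (xMon k (σ (OrderDual.ofDual γ))))
        (fun a b hab =>
          show toGd (xMon k (σ (OrderDual.ofDual a))) < toGd (xMon k (σ (OrderDual.ofDual b)))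
          from hahn_single_lt_single
            (show OrderDual.toDual (σ (OrderDual.ofDual a)) <
                OrderDual.toDual (σ (OrderDual.ofDual b)) from
              hσ (show OrderDual.ofDual b < OrderDual.ofDual a from hab))))
      (Multiplicative.toAdd g)
  else fun _ => 0

/-- The lift `ψ_σ : Γ^k → Γ^k` of `σ : Γ → Γ`, `ψ_σ(∏_γ x_γ^(g γ)) := ∏_γ x_(σ γ)^(g γ)`
(junk value `id` if `σ` is not strictly order-preserving). -/
def sigmaAuto (σ : Γ → Γ) : HahnGroup Γ k → HahnGroup Γ k :=
  if hσ : StrictMono σ then fun g =>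
    Multiplicative.ofAdd
      (HahnSeries.embDomain
        (OrderEmbedding.ofStrictMono
          (fun γ : Γᵒᵈ => OrderDual.toDual (σ (OrderDual.ofDual γ)))
          (fun a b hab =>
            show OrderDual.toDual (σ (OrderDual.ofDual a)) <
                OrderDual.toDual (σ (OrderDual.ofDual b)) from
              hσ (show OrderDual.ofDual b < OrderDual.ofDual a from hab)))
        (Multiplicative.toAdd g))
  else id

end Hahn

section CovariantInstances
open HahnSeries
variable {k : Type*} [Field k] [LinearOrder k] [IsStrictOrderedRing k] {Γ' : Type*} [LinearOrder Γ']

instance hahnAddLeftMono : AddLeftMono (HahnSeries Γ' k) :=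
  ⟨fun c a b h => by
    rcases h with rfl | h
    · exact le_refl _
    · exact Or.inr (by rwa [add_sub_add_left_eq_sub])⟩

instance hahnAddRightMono : AddRightMono (HahnSeries Γ' k) :=
  ⟨fun c a b h => by
    rcases h with rfl | h
    · exact le_refl _
    · exact Or.inr (by rwa [add_sub_add_right_eq_sub])⟩

end CovariantInstances
section Helpers
open HahnSeries

variable {k : Type*} [Field k] [LinearOrder k] [IsStrictOrderedRing k]

section OrderLemmas
variable {Γ' : Type*} [LinearOrder Γ']

theorem hahn_pos_iff {x : HahnSeries Γ' k} : 0 < x ↔ 0 < x.leadingCoeff := by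
  rw [hahn_lt_iff, sub_zero]

/-- If all of `x`'s support lies strictly above the leading exponent of the
positive series `y`, then `x < y`. -/
theorem hahn_lt_of_min_lt_support {x y : HahnSeries Γ' k} (hy : y ≠ 0)
    (hpos : 0 < y.leadingCoeff)
    (hx : ∀ γ ∈ x.support, y.isWF_support.min (HahnSeries.support_nonempty_iff.2 hy) < γ) :
    x < y := by
  rw [hahn_lt_iff]
  set m := y.isWF_support.min (HahnSeries.support_nonempty_iff.2 hy) with hm
  have hxm : x.coeff m = 0 := by
    by_contra hc
    exact lt_irrefl m (hx m (by rwa [HahnSeries.mem_support]))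
  have hym : y.coeff m ≠ 0 := y.isWF_support.min_mem (HahnSeries.support_nonempty_iff.2 hy)
  have hcoeff : (y - x).coeff m = y.coeff m := by
    rw [HahnSeries.coeff_sub, hxm, sub_zero]
  have hmem : m ∈ (y - x).support := by rw [HahnSeries.mem_support, hcoeff]; exact hym
  have hne : y - x ≠ 0 := HahnSeries.support_nonempty_iff.1 ⟨m, hmem⟩
  have hmin : (y - x).isWF_support.min (HahnSeries.support_nonempty_iff.2 hne) = m := by
    apply le_antisymm (Set.IsWF.min_le _ _ hmem)
    have hmm := (y - x).isWF_support.min_mem (HahnSeries.support_nonempty_iff.2 hne)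
    have : (y - x).support ⊆ y.support ∪ x.support := by
      intro δ hδ
      rw [sub_eq_add_neg] at hδ
      rcases HahnSeries.support_add_subset _ _ hδ with h | h
      · exact Or.inl h
      · exact Or.inr (by rwa [HahnSeries.support_neg] at h)
    rcases this hmm with h | h
    · exact Set.IsWF.min_le _ _ h
    · exact le_of_lt (hx _ h)
  rw [hahn_leadingCoeff_of_ne hne, hmin, hcoeff, ← hahn_leadingCoeff_of_ne hy]
  exact hpos

/-- If `0 < x < y` then the leading exponent of `y` is `≤` that of `x`. -/
theorem hahn_min_le_min_of_pos_lt {x y : HahnSeries Γ' k} (hx0 : x ≠ 0) (hy0 : y ≠ 0)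
    (hxpos : 0 < x) (hxy : x < y) :
    y.isWF_support.min (HahnSeries.support_nonempty_iff.2 hy0) ≤
      x.isWF_support.min (HahnSeries.support_nonempty_iff.2 hx0) := by
  by_contra hcon
  push_neg at hcon
  set mx := x.isWF_support.min (HahnSeries.support_nonempty_iff.2 hx0) with hmx
  set my := y.isWF_support.min (HahnSeries.support_nonempty_iff.2 hy0) with hmy
  have hyc : y.coeff mx = 0 := by
    by_contra hc
    exact absurd (Set.IsWF.min_le _ _ (by rwa [HahnSeries.mem_support])) (not_le.2 hcon)
  have hcoeff : (y - x).coeff mx = -x.leadingCoeff := by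
    rw [HahnSeries.coeff_sub, hyc, zero_sub, hahn_leadingCoeff_of_ne hx0]
  have hlcx : 0 < x.leadingCoeff := hahn_pos_iff.1 hxpos
  have hmem : mx ∈ (y - x).support := by
    rw [HahnSeries.mem_support, hcoeff]
    exact neg_ne_zero.2 (ne_of_gt hlcx)
  have hne : y - x ≠ 0 := HahnSeries.support_nonempty_iff.1 ⟨mx, hmem⟩
  have hmin : (y - x).isWF_support.min (HahnSeries.support_nonempty_iff.2 hne) = mx := by
    apply le_antisymm (Set.IsWF.min_le _ _ hmem)
    have hmm := (y - x).isWF_support.min_mem (HahnSeries.support_nonempty_iff.2 hne)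
    have : (y - x).support ⊆ y.support ∪ x.support := by
      intro δ hδ
      rw [sub_eq_add_neg] at hδ
      rcases HahnSeries.support_add_subset _ _ hδ with h | h
      · exact Or.inl h
      · exact Or.inr (by rwa [HahnSeries.support_neg] at h)
    rcases this hmm with h | h
    · exact le_trans (le_of_lt hcon) (Set.IsWF.min_le _ _ h)
    · exact Set.IsWF.min_le _ _ h
  have : 0 < (y - x).leadingCoeff := hxy
  rw [hahn_leadingCoeff_of_ne hne, hmin, hcoeff] at this
  exact absurd hlcx (not_lt.2 (le_of_lt (neg_pos.1 this)))

/-- If `±x` is below every positive multiple of the monomial at `μ`, then the whole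
support of `x` lies strictly above `μ`. -/
theorem hahn_support_gt_of_lt_single {x : HahnSeries Γ' k} {μ : Γ'}
    (h1 : ∀ c : k, 0 < c → x < HahnSeries.single μ c)
    (h2 : ∀ c : k, 0 < c → -x < HahnSeries.single μ c) :
    ∀ γ ∈ x.support, μ < γ := by
  by_cases hx0 : x = 0
  · intro γ hγ
    rw [hx0, HahnSeries.support_zero] at hγ
    exact absurd hγ (Set.notMem_empty γ)
  intro γ hγ
  set mx := x.isWF_support.min (HahnSeries.support_nonempty_iff.2 hx0) with hmx
  have hkey : μ < mx := by
    by_contra hcon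
    push_neg at hcon
    set a := x.leadingCoeff with ha
    have ha0 : a ≠ 0 := HahnSeries.leadingCoeff_ne_zero.2 hx0
    have hax : x.coeff mx = a := (hahn_leadingCoeff_of_ne hx0).symm
    set c := |a| / 2 with hc
    have hcpos : 0 < c := by positivity
    -- the series we analyze, depending on the sign of `a`
    rcases lt_or_gt_of_ne ha0 with haneg | hapos
    · -- use h2 : -x < single μ c
      have hlt := h2 c hcpos
      rw [hahn_lt_iff] at hlt
      have hzc : (HahnSeries.single μ c - -x).coeff mx < 0 := by
        rcases eq_or_lt_of_le hcon with heq | hlt'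
        · rw [HahnSeries.coeff_sub, HahnSeries.coeff_neg, hax, ← heq,
            HahnSeries.coeff_single_same, sub_neg_eq_add, hc]
          rw [abs_of_neg haneg]
          linarith
        · rw [HahnSeries.coeff_sub, HahnSeries.coeff_neg, hax,
            HahnSeries.coeff_single_of_ne (ne_of_lt hlt'), zero_sub, neg_neg]
          exact haneg
      have hmem : mx ∈ (HahnSeries.single μ c - -x).support := by
        rw [HahnSeries.mem_support]; exact ne_of_lt hzc
      have hne : HahnSeries.single μ c - -x ≠ 0 := HahnSeries.support_nonempty_iff.1 ⟨mx, hmem⟩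
      have hmin : (HahnSeries.single μ c - -x).isWF_support.min
          (HahnSeries.support_nonempty_iff.2 hne) = mx := by
        apply le_antisymm (Set.IsWF.min_le _ _ hmem)
        have hmm := (HahnSeries.single μ c - -x).isWF_support.min_mem
          (HahnSeries.support_nonempty_iff.2 hne)
        have : (HahnSeries.single μ c - -x).support ⊆ {μ} ∪ x.support := by
          intro δ hδ
          rw [sub_eq_add_neg, neg_neg] at hδ
          rcases HahnSeries.support_add_subset _ _ hδ with h | h
          · exact Or.inl (HahnSeries.support_single_subset h)
          · exact Or.inr h
        rcases this hmm with h | h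
        · rw [Set.mem_singleton_iff] at h; rw [h]; exact hcon
        · exact Set.IsWF.min_le _ _ h
      rw [hahn_leadingCoeff_of_ne hne, hmin] at hlt
      exact absurd hlt (not_lt.2 (le_of_lt hzc))
    · -- use h1 : x < single μ c
      have hlt := h1 c hcpos
      rw [hahn_lt_iff] at hlt
      have hzc : (HahnSeries.single μ c - x).coeff mx < 0 := by
        rcases eq_or_lt_of_le hcon with heq | hlt'
        · rw [HahnSeries.coeff_sub, hax, ← heq, HahnSeries.coeff_single_same, hc,
            abs_of_pos hapos]
          linarith
        · rw [HahnSeries.coeff_sub, hax, HahnSeries.coeff_single_of_ne (ne_of_lt hlt'),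
            zero_sub]
          exact neg_neg_iff_pos.2 hapos
      have hmem : mx ∈ (HahnSeries.single μ c - x).support := by
        rw [HahnSeries.mem_support]; exact ne_of_lt hzc
      have hne : HahnSeries.single μ c - x ≠ 0 := HahnSeries.support_nonempty_iff.1 ⟨mx, hmem⟩
      have hmin : (HahnSeries.single μ c - x).isWF_support.min
          (HahnSeries.support_nonempty_iff.2 hne) = mx := by
        apply le_antisymm (Set.IsWF.min_le _ _ hmem)
        have hmm := (HahnSeries.single μ c - x).isWF_support.min_mem
          (HahnSeries.support_nonempty_iff.2 hne)
        have : (HahnSeries.single μ c - x).support ⊆ {μ} ∪ x.support := by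
          intro δ hδ
          rw [sub_eq_add_neg] at hδ
          rcases HahnSeries.support_add_subset _ _ hδ with h | h
          · exact Or.inl (HahnSeries.support_single_subset h)
          · exact Or.inr (by rwa [HahnSeries.support_neg] at h)
        rcases this hmm with h | h
        · rw [Set.mem_singleton_iff] at h; rw [h]; exact hcon
        · exact Set.IsWF.min_le _ _ h
      rw [hahn_leadingCoeff_of_ne hne, hmin] at hlt
      exact absurd hlt (not_lt.2 (le_of_lt hzc))
  exact lt_of_lt_of_le hkey (Set.IsWF.min_le _ _ hγ)

theorem hahn_single_pos' {μ : Γ'} {c : k} (hc : 0 < c) :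
    (0 : HahnSeries Γ' k) < HahnSeries.single μ c := by
  rw [hahn_pos_iff, HahnSeries.leadingCoeff_of_single]
  exact hc

end OrderLemmas

end Helpers
section DaggerLemmas
open HahnSeries
variable {k : Type*} [Field k] [LinearOrder k] [IsStrictOrderedRing k] {G : Type*} [CommGroup G] [LinearOrder G] [IsOrderedMonoid G]
variable {l : G → HahnSeries (gdual G) k}

theorem prelog_one (hl : IsPrelogSection l) : l 1 = 0 := by
  have := hl.map_mul 1 1
  rw [mul_one] at this
  exact right_eq_add.1 this

theorem prelog_inv (hl : IsPrelogSection l) (g : G) : l g⁻¹ = -(l g) := by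
  have := hl.map_mul g g⁻¹
  rw [mul_inv_cancel, prelog_one hl] at this
  exact eq_neg_of_add_eq_zero_right this.symm

/-- Condition (†) forces the support of `l h` (for `h ∈ H`) to lie strictly below any
element of `H^{>U}`. -/
theorem dagger_supp {U H : Subgroup G} (hl : IsPrelogSection l) (hdag : CondDagger l U H)
    {h m₁ : G} (hh : h ∈ H) (hm : m₁ ∈ H) (hum : ∀ u ∈ U, u < m₁) :
    ∀ γ ∈ (l h).support, toGd m₁ < γ := by
  have hcond : ∀ c : k, c ≠ 0 → ∀ γ ∈ (HahnSeries.single (toGd m₁) c).support,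
      toG γ ∈ H ∧ ∀ u ∈ U, u < toG γ := by
    intro c _ γ hγ
    have : γ = toGd m₁ := HahnSeries.support_single_subset hγ
    rw [this]
    exact ⟨hm, hum⟩
  apply hahn_support_gt_of_lt_single
  · intro c hc
    have := hdag h hh (HahnSeries.single (toGd m₁) c)
      (HahnSeries.single_ne_zero (ne_of_gt hc)) (hcond c (ne_of_gt hc))
    rwa [abs_of_pos (hahn_single_pos' hc)] at this
  · intro c hc
    have := hdag h⁻¹ (H.inv_mem hh) (HahnSeries.single (toGd m₁) c)
      (HahnSeries.single_ne_zero (ne_of_gt hc)) (hcond c (ne_of_gt hc))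
    rwa [abs_of_pos (hahn_single_pos' hc), prelog_inv hl] at this

theorem supp_cond_sub {U H : Subgroup G} {f f' : HahnSeries (gdual G) k}
    (hf : ∀ γ ∈ f.support, toG γ ∈ H ∧ ∀ u ∈ U, u < toG γ)
    (hf' : ∀ γ ∈ f'.support, toG γ ∈ H ∧ ∀ u ∈ U, u < toG γ) :
    ∀ γ ∈ (f' - f).support, toG γ ∈ H ∧ ∀ u ∈ U, u < toG γ := by
  intro γ hγ
  rw [sub_eq_add_neg] at hγ
  rcases HahnSeries.support_add_subset _ _ hγ with h | h
  · exact hf' γ h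
  · rw [HahnSeries.support_neg] at h
    exact hf γ h

theorem key_lt_aux {U H : Subgroup G} (hl : IsPrelogSection l) (hdag : CondDagger l U H)
    {h h' : G} (hh : h ∈ H) (hh' : h' ∈ H) {f f' : HahnSeries (gdual G) k}
    (hf : ∀ γ ∈ f.support, toG γ ∈ H ∧ ∀ u ∈ U, u < toG γ)
    (hf' : ∀ γ ∈ f'.support, toG γ ∈ H ∧ ∀ u ∈ U, u < toG γ)
    (hff' : f < f') : l h + f < l h' + f' := by
  have hne : f' - f ≠ 0 := sub_ne_zero.2 (ne_of_gt hff')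
  have := hdag (h * h'⁻¹) (H.mul_mem hh (H.inv_mem hh')) (f' - f) hne (supp_cond_sub hf hf')
  rw [abs_of_pos (sub_pos.2 hff'), hl.map_mul, prelog_inv hl] at this
  have h2 : l h - l h' < f' - f := by rwa [sub_eq_add_neg]
  have h3 := sub_lt_sub_iff.1 h2
  rwa [add_comm f' (l h')] at h3

theorem key_lt_iff {U H : Subgroup G} (hl : IsPrelogSection l) (hdag : CondDagger l U H)
    {h h' : G} (hh : h ∈ H) (hh' : h' ∈ H) {f f' : HahnSeries (gdual G) k}
    (hf : ∀ γ ∈ f.support, toG γ ∈ H ∧ ∀ u ∈ U, u < toG γ)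
    (hf' : ∀ γ ∈ f'.support, toG γ ∈ H ∧ ∀ u ∈ U, u < toG γ) :
    l h + f < l h' + f' ↔ (f < f' ∨ (f = f' ∧ h < h')) := by
  constructor
  · intro hlt
    rcases lt_trichotomy f f' with hc | hc | hc
    · exact Or.inl hc
    · subst hc
      exact Or.inr ⟨rfl, hl.strictMono.lt_iff_lt.1 (lt_of_add_lt_add_right hlt)⟩
    · exact absurd (key_lt_aux hl hdag hh' hh hf' hf hc) (asymm hlt)
  · rintro (hc | ⟨rfl, hc⟩)
    · exact key_lt_aux hl hdag hh hh' hf hf' hc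
    · exact add_lt_add_left (hl.strictMono hc) f

theorem key_eq_iff {U H : Subgroup G} (hl : IsPrelogSection l) (hdag : CondDagger l U H)
    {h h' : G} (hh : h ∈ H) (hh' : h' ∈ H) {f f' : HahnSeries (gdual G) k}
    (hf : ∀ γ ∈ f.support, toG γ ∈ H ∧ ∀ u ∈ U, u < toG γ)
    (hf' : ∀ γ ∈ f'.support, toG γ ∈ H ∧ ∀ u ∈ U, u < toG γ)
    (heq : l h + f = l h' + f') : h = h' ∧ f = f' := by
  have h1 : ¬(l h + f < l h' + f') := by rw [heq]; exact lt_irrefl _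
  have h2 : ¬(l h' + f' < l h + f) := by rw [heq]; exact lt_irrefl _
  rw [key_lt_iff hl hdag hh hh' hf hf'] at h1
  rw [key_lt_iff hl hdag hh' hh hf' hf] at h2
  push_neg at h1 h2
  have hff : f = f' := le_antisymm h2.1 h1.1
  exact ⟨le_antisymm (h2.2 hff.symm) (h1.2 hff), hff⟩

end DaggerLemmas
section SharpLemmas
open HahnSeries
variable {k : Type*} [Field k] [LinearOrder k] [IsStrictOrderedRing k] {G : Type*} [CommGroup G] [LinearOrder G] [IsOrderedMonoid G]
variable {l : G → HahnSeries (gdual G) k}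

theorem iotaSharp_strictMono (hl : IsPrelogSection l) :
    StrictMono (iotaSharp l hl.supp_large) := by
  intro a b hab
  show (⟨l a, hl.supp_large a⟩ : ↥(largeSeries k G)) < ⟨l b, hl.supp_large b⟩
  exact Subtype.mk_lt_mk.2 (hl.strictMono hab)

theorem toAdd_pack (hls : ∀ g, l g ∈ largeSeries k G) (h : G) (f : HahnSeries (gdual G) k)
    (hf : f ∈ largeSeries k G) :
    ((Multiplicative.toAdd (iotaSharp l hls h * Multiplicative.ofAdd
        (⟨f, hf⟩ : ↥(largeSeries k G))) : ↥(largeSeries k G)) : HahnSeries (gdual G) k)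
      = l h + f := rfl

theorem pack_lt_iff (hls : ∀ g, l g ∈ largeSeries k G) (h h' : G)
    (f f' : HahnSeries (gdual G) k) (hf : f ∈ largeSeries k G) (hf' : f' ∈ largeSeries k G) :
    (iotaSharp l hls h * Multiplicative.ofAdd (⟨f, hf⟩ : ↥(largeSeries k G)) <
      iotaSharp l hls h' * Multiplicative.ofAdd (⟨f', hf'⟩ : ↥(largeSeries k G)))
      ↔ l h + f < l h' + f' := Iff.rfl

theorem pack_eq_iff (hls : ∀ g, l g ∈ largeSeries k G) (h h' : G)
    (f f' : HahnSeries (gdual G) k) (hf : f ∈ largeSeries k G) (hf' : f' ∈ largeSeries k G) :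
    (iotaSharp l hls h * Multiplicative.ofAdd (⟨f, hf⟩ : ↥(largeSeries k G)) =
      iotaSharp l hls h' * Multiplicative.ofAdd (⟨f', hf'⟩ : ↥(largeSeries k G)))
      ↔ l h + f = l h' + f' := by
  constructor
  · intro e
    exact congrArg (fun z => ((Multiplicative.toAdd z : ↥(largeSeries k G)) :
      HahnSeries (gdual G) k)) e
  · intro e
    have : (⟨l h + f, add_mem (hls h) hf⟩ : ↥(largeSeries k G)) = ⟨l h' + f', add_mem (hls h') hf'⟩ :=
      Subtype.ext e
    exact congrArg Multiplicative.ofAdd this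

theorem lsharpFun_support (hl : IsPrelogSection l) (x : Gsharp k G) :
    (lsharpFun l hl.supp_large x).support ⊆
      (fun γ => toGd (iotaSharp l hl.supp_large (toG γ))) ''
        ((Multiplicative.toAdd x : ↥(largeSeries k G)) : HahnSeries (gdual G) k).support := by
  rw [lsharpFun, extMap, dif_pos (iotaSharp_strictMono hl)]
  exact HahnSeries.support_embDomain_subset

/-- The core estimate: every monomial of `ι(l h + f)` is smaller than any monomial
`ι(h₁)·e(f₁)` with `f₁ > 0`. -/
theorem growth_main {U H : Subgroup G} (hl : IsPrelogSection l) (hdag : CondDagger l U H)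
    {h h₁ : G} (hh : h ∈ H) (hh₁ : h₁ ∈ H) {f f₁ : HahnSeries (gdual G) k}
    (hf : ∀ γ ∈ f.support, toG γ ∈ H ∧ ∀ u ∈ U, u < toG γ)
    (hf₁ : ∀ γ ∈ f₁.support, toG γ ∈ H ∧ ∀ u ∈ U, u < toG γ)
    (hf₁pos : 0 < f₁) {γ : gdual G} (hγ : γ ∈ (l h + f).support) :
    l (toG γ) < l h₁ + f₁ := by
  have hf₁0 : f₁ ≠ 0 := ne_of_gt hf₁pos
  set μ₁ := f₁.isWF_support.min (HahnSeries.support_nonempty_iff.2 hf₁0) with hμ₁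
  have hμ₁mem : μ₁ ∈ f₁.support := f₁.isWF_support.min_mem _
  obtain ⟨hm₁H, hum₁⟩ := hf₁ μ₁ hμ₁mem
  set m₁ := toG μ₁ with hm₁
  -- all exponents of `l g - l h₁` lie strictly above `μ₁`
  have hsupp : ∀ δ ∈ (l (toG γ) - l h₁).support, μ₁ < δ := by
    have hsuppg : ∀ δ ∈ (l (toG γ)).support, μ₁ < δ := by
      rcases HahnSeries.support_add_subset _ _ hγ with hcase | hcase
      · -- γ ∈ supp (l h) : use 1 < toG γ < m₁
        have hgm : toG γ < m₁ := dagger_supp hl hdag hh hm₁H hum₁ γ hcase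
        have hg1 : (1 : G) < toG γ := hl.supp_large h γ hcase
        have hlgpos : 0 < l (toG γ) := by
          have := hl.strictMono hg1
          rwa [prelog_one hl] at this
        have hlglt : l (toG γ) < l m₁ := hl.strictMono hgm
        have hlg0 : l (toG γ) ≠ 0 := ne_of_gt hlgpos
        have hlm0 : l m₁ ≠ 0 := ne_of_gt (lt_trans hlgpos hlglt)
        have hminle := hahn_min_le_min_of_pos_lt hlg0 hlm0 hlgpos hlglt
        have hm₁supp : ∀ δ ∈ (l m₁).support, μ₁ < δ :=
          dagger_supp hl hdag hm₁H hm₁H hum₁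
        intro δ hδ
        have h1 : μ₁ < (l m₁).isWF_support.min (HahnSeries.support_nonempty_iff.2 hlm0) :=
          hm₁supp _ ((l m₁).isWF_support.min_mem _)
        exact lt_of_lt_of_le h1 (le_trans hminle (Set.IsWF.min_le _ _ hδ))
      · -- γ ∈ supp f : toG γ ∈ H, use dagger directly
        exact dagger_supp hl hdag (hf γ hcase).1 hm₁H hum₁
    intro δ hδ
    rw [sub_eq_add_neg] at hδ
    rcases HahnSeries.support_add_subset _ _ hδ with hcase | hcase
    · exact hsuppg δ hcase
    · rw [HahnSeries.support_neg] at hcase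
      exact dagger_supp hl hdag hh₁ hm₁H hum₁ δ hcase
  have hlt : l (toG γ) - l h₁ < f₁ :=
    hahn_lt_of_min_lt_support hf₁0 (hahn_pos_iff.1 hf₁pos) hsupp
  have := sub_lt_iff_lt_add.1 hlt
  rwa [add_comm f₁ (l h₁)] at this

end SharpLemmas
section GsharpBridge
open HahnSeries
variable {k : Type*} [Field k] [LinearOrder k] [IsStrictOrderedRing k] {G : Type*} [CommGroup G] [LinearOrder G] [IsOrderedMonoid G]
variable {l : G → HahnSeries (gdual G) k}

theorem gsharp_ext {x y : Gsharp k G}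
    (h : ((Multiplicative.toAdd x : ↥(largeSeries k G)) : HahnSeries (gdual G) k) =
      ((Multiplicative.toAdd y : ↥(largeSeries k G)) : HahnSeries (gdual G) k)) : x = y :=
  Multiplicative.toAdd.injective (Subtype.ext h)

theorem gsharp_lt_iff {x y : Gsharp k G} :
    x < y ↔ ((Multiplicative.toAdd x : ↥(largeSeries k G)) : HahnSeries (gdual G) k) <
      ((Multiplicative.toAdd y : ↥(largeSeries k G)) : HahnSeries (gdual G) k) := Iff.rfl

theorem supp_cond_zero (U H : Subgroup G) :
    ∀ γ ∈ (0 : HahnSeries (gdual G) k).support, toG γ ∈ H ∧ ∀ u ∈ U, u < toG γ := by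
  intro γ hγ
  rw [HahnSeries.support_zero] at hγ
  exact absurd hγ (Set.notMem_empty γ)

theorem supp_cond_add {U H : Subgroup G} {f f' : HahnSeries (gdual G) k}
    (hf : ∀ γ ∈ f.support, toG γ ∈ H ∧ ∀ u ∈ U, u < toG γ)
    (hf' : ∀ γ ∈ f'.support, toG γ ∈ H ∧ ∀ u ∈ U, u < toG γ) :
    ∀ γ ∈ (f + f').support, toG γ ∈ H ∧ ∀ u ∈ U, u < toG γ := by
  intro γ hγ
  rcases HahnSeries.support_add_subset _ _ hγ with h | h
  exacts [hf γ h, hf' γ h]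

theorem supp_cond_neg {U H : Subgroup G} {f : HahnSeries (gdual G) k}
    (hf : ∀ γ ∈ f.support, toG γ ∈ H ∧ ∀ u ∈ U, u < toG γ) :
    ∀ γ ∈ (-f).support, toG γ ∈ H ∧ ∀ u ∈ U, u < toG γ := by
  intro γ hγ
  rw [HahnSeries.support_neg] at hγ
  exact hf γ hγ

end GsharpBridge
/-- Let `l` be a prelogarithmic section of `k((G))`, `U ⊊ H` subgroups
of `G` with `U` a proper convex subgroup of `H`, satisfying condition (†).  Inside the
exponential extension `G^#`, let `H^{#,U} := ι(H)·e[k((H^{>U}))]` (= `sharpProdSet`).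
Then `H^{#,U}` is a subgroup of `G^#`; (i) `ι(H)` is a proper convex subgroup of
`H^{#,U}`; (ii) every element of `H^{#,U}` has a unique representation `ι(h)·e(f)` with
`h ∈ H`, `f ∈ k((H^{>U}))`, and `H^{#,U}` is ordered anti-lexicographically (so it is the
anti-lexicographic product of `ι(H)` and `e[k((H^{>U}))]`); (iii) `l^#(h^#) < |F|` for
every `h^# ∈ H^{#,U}` and every nonzero `F ∈ k(((H^{#,U})^{>ι(H)}))`. -/
theorem sharp_extension_lemma {k : Type*} [Field k] [LinearOrder k] [IsStrictOrderedRing k]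
    {G : Type*} [CommGroup G] [LinearOrder G] [IsOrderedMonoid G]
    (l : G → HahnSeries (gdual G) k) (hl : IsPrelogSection l)
    (U H : Subgroup G) (hUH : U ≤ H) (hproper : U ≠ H)
    (hconvex : ∀ h ∈ H, ∀ u ∈ U, 1 < h → h < u → h ∈ U)
    (hdag : CondDagger l U H) :
    ((1 : Gsharp k G) ∈ sharpProdSet l hl.supp_large U H ∧
     (∀ x ∈ sharpProdSet l hl.supp_large U H, ∀ y ∈ sharpProdSet l hl.supp_large U H,
        x * y ∈ sharpProdSet l hl.supp_large U H) ∧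
     (∀ x ∈ sharpProdSet l hl.supp_large U H, x⁻¹ ∈ sharpProdSet l hl.supp_large U H)) ∧
    ((∀ h ∈ H, iotaSharp l hl.supp_large h ∈ sharpProdSet l hl.supp_large U H) ∧
     (∃ x ∈ sharpProdSet l hl.supp_large U H,
        x ∉ iotaSharp l hl.supp_large '' (H : Set G)) ∧
     (∀ x ∈ sharpProdSet l hl.supp_large U H, ∀ h ∈ H,
        1 < x → x < iotaSharp l hl.supp_large h →
        x ∈ iotaSharp l hl.supp_large '' (H : Set G))) ∧
    ((∀ h ∈ H, ∀ h' ∈ H, ∀ f f' : HahnSeries (gdual G) k,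
       ∀ hf : ∀ γ ∈ f.support, toG γ ∈ H ∧ ∀ u ∈ U, u < toG γ,
       ∀ hf' : ∀ γ ∈ f'.support, toG γ ∈ H ∧ ∀ u ∈ U, u < toG γ,
        iotaSharp l hl.supp_large h *
          Multiplicative.ofAdd (⟨f, mem_large_of_gt hf⟩ : ↥(largeSeries k G)) =
        iotaSharp l hl.supp_large h' *
          Multiplicative.ofAdd (⟨f', mem_large_of_gt hf'⟩ : ↥(largeSeries k G)) →
        h = h' ∧ f = f') ∧
     (∀ h ∈ H, ∀ h' ∈ H, ∀ f f' : HahnSeries (gdual G) k,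
       ∀ hf : ∀ γ ∈ f.support, toG γ ∈ H ∧ ∀ u ∈ U, u < toG γ,
       ∀ hf' : ∀ γ ∈ f'.support, toG γ ∈ H ∧ ∀ u ∈ U, u < toG γ,
        (iotaSharp l hl.supp_large h *
            Multiplicative.ofAdd (⟨f, mem_large_of_gt hf⟩ : ↥(largeSeries k G)) <
          iotaSharp l hl.supp_large h' *
            Multiplicative.ofAdd (⟨f', mem_large_of_gt hf'⟩ : ↥(largeSeries k G)) ↔
          (f < f' ∨ (f = f' ∧ h < h'))))) ∧
    (∀ x ∈ sharpProdSet l hl.supp_large U H,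
      ∀ F : HahnSeries (gdual (Gsharp k G)) k, F ≠ 0 →
      (∀ η ∈ F.support, toG η ∈ sharpProdSet l hl.supp_large U H ∧
        ∀ h ∈ H, iotaSharp l hl.supp_large h < toG η) →
      lsharpFun l hl.supp_large x < |F|) := by
  refine ⟨⟨?_, ?_, ?_⟩, ⟨?_, ?_, ?_⟩, ⟨?_, ?_⟩, ?_⟩
  · -- 1 ∈ H^{#,U}
    exact ⟨1, H.one_mem, 0, supp_cond_zero U H, gsharp_ext (show (0 : HahnSeries (gdual G) k)
      = l 1 + 0 by rw [prelog_one hl, add_zero])⟩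
  · -- closed under multiplication
    rintro x ⟨h, hh, f, hf, rfl⟩ y ⟨h', hh', f', hf', rfl⟩
    exact ⟨h * h', H.mul_mem hh hh', f + f', supp_cond_add hf hf', gsharp_ext (show
      (l h + f) + (l h' + f') = l (h * h') + (f + f') by rw [hl.map_mul]; abel)⟩
  · -- closed under inverses
    rintro x ⟨h, hh, f, hf, rfl⟩
    exact ⟨h⁻¹, H.inv_mem hh, -f, supp_cond_neg hf, gsharp_ext (show
      -(l h + f) = l h⁻¹ + -f by rw [prelog_inv hl, neg_add])⟩
  · -- ι(H) ⊆ H^{#,U}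
    intro h hh
    exact ⟨h, hh, 0, supp_cond_zero U H, gsharp_ext (show l h = l h + 0 by rw [add_zero])⟩
  · -- ι(H) is a proper subset of H^{#,U}
    obtain ⟨g, hgH, hgU⟩ : ∃ g, g ∈ H ∧ g ∉ U := by
      by_contra hc
      push_neg at hc
      exact hproper (le_antisymm hUH fun z hz => hc z hz)
    obtain ⟨h₀, hh₀H, hh₀U, hh₀1⟩ : ∃ h₀, h₀ ∈ H ∧ h₀ ∉ U ∧ 1 < h₀ := by
      rcases lt_trichotomy g 1 with hg | hg | hg
      · exact ⟨g⁻¹, H.inv_mem hgH, fun hc => hgU (by simpa using U.inv_mem hc),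
          one_lt_inv_of_inv hg⟩
      · exact absurd (hg ▸ U.one_mem) hgU
      · exact ⟨g, hgH, hgU, hg⟩
    have hgtU : ∀ u ∈ U, u < h₀ := by
      intro u hu
      by_contra hc
      push_neg at hc
      rcases eq_or_lt_of_le hc with heq | hlt
      · exact hh₀U (heq ▸ hu)
      · exact hh₀U (hconvex h₀ hh₀H u hu hh₀1 hlt)
    have hf₀cond : ∀ γ ∈ (HahnSeries.single (toGd h₀) (1 : k)).support,
        toG γ ∈ H ∧ ∀ u ∈ U, u < toG γ := by
      intro γ hγ
      have hγ' : γ = toGd h₀ := HahnSeries.support_single_subset hγ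
      rw [hγ']
      exact ⟨hh₀H, hgtU⟩
    refine ⟨_, ⟨1, H.one_mem, HahnSeries.single (toGd h₀) (1 : k), hf₀cond, rfl⟩, ?_⟩
    rintro ⟨h'', hh'', heq⟩
    have hval : l h'' + 0 = l 1 + HahnSeries.single (toGd h₀) (1 : k) := by
      rw [add_zero]
      exact congrArg (fun z => ((Multiplicative.toAdd z : ↥(largeSeries k G)) :
        HahnSeries (gdual G) k)) heq
    have := (key_eq_iff hl hdag hh'' H.one_mem (supp_cond_zero U H) hf₀cond hval).2
    exact HahnSeries.single_ne_zero one_ne_zero this.symm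
  · -- convexity of ι(H) in H^{#,U}
    rintro x ⟨h, hh, f, hf, rfl⟩ h₀ hh₀ h1x hxlt
    have h1v : l 1 + 0 < l h + f := by
      rw [prelog_one hl, add_zero]
      exact h1x
    have h2v : l h + f < l h₀ + 0 := by
      rw [add_zero]
      exact hxlt
    have hf0 : f = 0 := by
      rcases (key_lt_iff hl hdag H.one_mem hh (supp_cond_zero U H) hf).1 h1v with hp | ⟨h0, _⟩
      · rcases (key_lt_iff hl hdag hh hh₀ hf (supp_cond_zero U H)).1 h2v with hn | ⟨h0', _⟩
        · exact absurd (lt_trans hp hn) (lt_irrefl _)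
        · exact h0'
      · exact h0.symm
    exact ⟨h, hh, gsharp_ext (show l h = l h + f by rw [hf0, add_zero])⟩
  · -- uniqueness of the representation
    intro h hh h' hh' f f' hf hf' heq
    exact key_eq_iff hl hdag hh hh' hf hf'
      (congrArg (fun z => ((Multiplicative.toAdd z : ↥(largeSeries k G)) :
        HahnSeries (gdual G) k)) heq)
  · -- anti-lexicographic order
    intro h hh h' hh' f f' hf hf'
    exact key_lt_iff hl hdag hh hh' hf hf'
  · -- the growth condition (iii)
    rintro x ⟨h, hh, f, hf, rfl⟩ F hF0 hFsupp
    have hFabs : |F| ≠ 0 := abs_ne_zero.2 hF0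
    have hpos : 0 < |F|.leadingCoeff := hahn_pos_iff.1 (abs_pos.2 hF0)
    have hss : |F|.support = F.support := by
      rcases abs_choice F with habs | habs
      · rw [habs]
      · rw [habs, HahnSeries.support_neg]
    apply hahn_lt_of_min_lt_support hFabs hpos
    intro δ hδ
    obtain ⟨γ, hγ, rfl⟩ := lsharpFun_support hl _ hδ
    have hγ' : γ ∈ (l h + f).support := hγ
    set η₀ := |F|.isWF_support.min (HahnSeries.support_nonempty_iff.2 hFabs) with hη₀
    have hη₀F : η₀ ∈ F.support := by
      have hmm : η₀ ∈ |F|.support :=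
        |F|.isWF_support.min_mem (HahnSeries.support_nonempty_iff.2 hFabs)
      rwa [hss] at hmm
    obtain ⟨hmemS, hgt⟩ := hFsupp η₀ hη₀F
    obtain ⟨h₁, hh₁, f₁, hf₁, hrepr⟩ := hmemS
    have hf₁pos : (0 : HahnSeries (gdual G) k) < f₁ := by
      have hι := hgt h₁ hh₁
      rw [hrepr] at hι
      have hv : l h₁ < l h₁ + f₁ := hι
      exact (lt_add_iff_pos_right (l h₁)).1 hv
    have hfinal : l (toG γ) < l h₁ + f₁ := growth_main hl hdag hh hh₁ hf hf₁ hf₁pos hγ'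
    show η₀ < toGd (iotaSharp l hl.supp_large (toG γ))
    have hlt : iotaSharp l hl.supp_large (toG γ) < toG η₀ := by
      rw [hrepr]
      exact hfinal
    exact hlt

end
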